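/- If n is a positive odd integer and d₁, d₂ are positive divisors of (n²+1)/2 with d₁ + d₂ = δn + ε for integers δ > 0 and ε, then either δ and ε are both odd, or δ ≡ ε + 2 ≡ 0 or 2 (mod 4). -/

import Mathlib

/-- If `n` is a positive odd integer and `d₁, d₂` are positive divisors of `(n²+1)/2` with
`d₁ + d₂ = δ·n + ε` for integers `δ > 0` and `ε`, then either `δ` and `ε` are both odd, or
`δ ≡ ε + 2 ≡ 0 or 2 (mod 4)`. -/
lemma key_nat (n : ℕ) (hn : n % 2 = 1) : ∀ d : ℕ, d ∣ (n^2+1)/2 → d % 4 = 1 := by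
  obtain ⟨k, hk⟩ : ∃ k, n = 2*k+1 := ⟨n/2, by omega⟩
  obtain ⟨j, hj2, hj1⟩ : ∃ j, n^2 + 1 = 4*j+2 ∧ (n^2+1)/2 = 2*j+1 := by
    refine ⟨k*(k+1), by subst hk; ring, ?_⟩
    have : n^2 + 1 = 2 * (2*(k*(k+1))+1) := by subst hk; ring
    rw [this, Nat.mul_div_cancel_left _ (by norm_num)]
  intro d
  induction d using Nat.strong_induction_on with
  | _ d ih =>
    intro hd
    have hd0 : d ≠ 0 := by
      rintro rfl
      have := Nat.eq_zero_of_zero_dvd hd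
      omega
    rcases eq_or_ne d 1 with rfl | hd1
    · norm_num
    · set p := d.minFac with hp
      have hpp : p.Prime := Nat.minFac_prime hd1
      have hpd : p ∣ d := Nat.minFac_dvd d
      have hpm : p ∣ (n^2+1)/2 := hpd.trans hd
      have hp2 : p ≠ 2 := by
        intro h
        rw [h] at hpm
        obtain ⟨c, hc⟩ := hpm
        rw [hj1] at hc
        omega
      have hpodd : p % 2 = 1 := Nat.odd_iff.mp (hpp.odd_of_ne_two hp2)
      have hpn : p ∣ n^2 + 1 := hpm.trans ⟨2, by rw [hj1]; omega⟩
      haveI : Fact p.Prime := ⟨hpp⟩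
      have hsq : IsSquare (-1 : ZMod p) := by
        refine ⟨(n : ZMod p), ?_⟩
        have h0 : ((n^2+1 : ℕ) : ZMod p) = 0 := (ZMod.natCast_eq_zero_iff _ _).mpr hpn
        push_cast at h0
        linear_combination -h0
      have hp4 : p % 4 = 1 := by
        have h3 := (ZMod.exists_sq_eq_neg_one_iff (p := p)).mp hsq
        omega
      have hq : d / p ∣ (n^2+1)/2 := (Nat.div_dvd_of_dvd hpd).trans hd
      have hlt : d / p < d := Nat.div_lt_self (by omega) hpp.two_le
      have hq4 := ih _ hlt hq
      have hdp : d = p * (d / p) := (Nat.mul_div_cancel' hpd).symm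
      rw [hdp, Nat.mul_mod, hp4, hq4]

theorem stmt5 (n δ ε d₁ d₂ : ℤ) (hn : 0 < n) (hodd : Odd n) (hδ : 0 < δ)
    (h₁ : 0 < d₁) (h₂ : 0 < d₂)
    (hd₁ : d₁ ∣ (n ^ 2 + 1) / 2) (hd₂ : d₂ ∣ (n ^ 2 + 1) / 2)
    (hsum : d₁ + d₂ = δ * n + ε) :
    (Odd δ ∧ Odd ε) ∨
    ((δ % 4 = 0 ∧ (ε + 2) % 4 = 0) ∨ (δ % 4 = 2 ∧ (ε + 2) % 4 = 2)) := by
  set N := n.toNat with hN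
  have hnN : (N : ℤ) = n := Int.toNat_of_nonneg hn.le
  have hN2 : N % 2 = 1 := by
    obtain ⟨k, hk⟩ := hodd
    omega
  have hcast : (((N^2+1)/2 : ℕ) : ℤ) = (n^2+1)/2 := by
    rw [Int.natCast_ediv, ← Int.natCast_tdiv_eq_ediv]
    push_cast [hnN]
    refine Int.tdiv_eq_ediv_of_dvd ?_
    obtain ⟨k, hk⟩ := hodd
    exact ⟨2*k^2+2*k+1, by subst hk; ring⟩
  have key : ∀ d : ℤ, 0 < d → d ∣ (n^2+1)/2 → d % 4 = 1 := by
    intro d hd hdd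
    have h1 : d.natAbs ∣ (N^2+1)/2 := by
      have := Int.natAbs_dvd_natAbs.mpr hdd
      rwa [← hcast, Int.natAbs_natCast] at this
    have h2 := key_nat N hN2 _ h1
    omega
  have k1 := key d₁ h₁ hd₁
  have k2 := key d₂ h₂ hd₂
  have hsum4 : (δ * n + ε) % 4 = 2 := by omega
  have hmul : δ * n % 4 = (δ % 4) * (n % 4) % 4 := Int.mul_emod δ n 4
  have hadd : (δ * n + ε) % 4 = (δ * n % 4 + ε % 4) % 4 := Int.add_emod _ _ _
  have hn4 : n % 4 = 1 ∨ n % 4 = 3 := by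
    obtain ⟨k, hk⟩ := hodd
    omega
  have hδ4 : δ % 4 = 0 ∨ δ % 4 = 1 ∨ δ % 4 = 2 ∨ δ % 4 = 3 := by omega
  simp only [Int.odd_iff]
  rcases hn4 with h | h <;> rcases hδ4 with h' | h' | h' | h' <;>
    rw [h, h'] at hmul <;> norm_num at hmul <;> omega
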